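/- Let X ↪ Y be an inclusion of simplicial sets and let ν ⊆ μ ⊆ Y₀ be sets of vertices; write ν′ = ν ∩ X₀ and μ′ = μ ∩ X₀. Then the widened inclusion ({0} × Y) ∪ W_{μ′}(X) ↪ W_μ(Y) factors as a composite of two monomorphisms: first the inclusion ({0} × Y) ∪ W_{μ′}(X) ↪ W_ν(Y) ∪ W_{μ′}(X), which is a pushout of the inclusion X ↪ Y widened at ν; and then the inclusion W_ν(Y) ∪ W_{μ′}(X) ↪ W_μ(Y), which is isomorphic in the arrow category to the inclusion W_{ν′}(X) ↪ W_ν(Y) widened at the set of vertices {(0, v) : v ∈ μ ∖ ν}. -/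

import Mathlib

open CategoryTheory Simplicial Opposite Limits

namespace Paper

/-! ## The simplicial set `J`, nerve of the free-living isomorphism -/

/-- The simplicial set `J`, the nerve of the free-living isomorphism `𝕀`:
its `n`-simplices are the tuples `{0,1}^(n+1)` (recorded as `Bool`-valued functions,
`false` being the vertex `0` and `true` the vertex `1`), with all simplicial
operators acting by reindexing. -/
def J : SSet.{0} where
  obj m := Fin (m.unop.len + 1) → Bool
  map f := TypeCat.ofHom fun a => a ∘ f.unop.toOrderHom
  map_id _ := rfl
  map_comp _ _ := rfl

/-- The two vertices `0, 1 : Δ[0] ⟶ J` of `J`; `ptJ false` is the vertex `0` and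
`ptJ true` is the vertex `1`. -/
def ptJ (b : Bool) : Δ[0] ⟶ J where
  app _ := TypeCat.ofHom fun _ => fun _ => b
  naturality _ _ _ := rfl

/-- The boundary `∂J = {0} ∪ {1}` of `J` (two discrete points). -/
def bJ : SSet.{0} where
  obj _ := Bool
  map _ := TypeCat.ofHom fun b => b
  map_id _ := rfl
  map_comp _ _ := rfl

/-- The inclusion `∂J ↪ J`. -/
def bJIncl : bJ ⟶ J where
  app _ := TypeCat.ofHom fun b => fun _ => b
  naturality _ _ _ := rfl

/-! ## Binary products and pushout-products -/

/-- The (pointwise) product of two simplicial sets. -/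
def sprod (X Y : SSet.{0}) : SSet.{0} where
  obj m := X.obj m × Y.obj m
  map f := TypeCat.ofHom fun p => (X.map f p.1, Y.map f p.2)
  map_id m := by
    ext p
    · exact Functor.map_id_apply X m p.1
    · exact Functor.map_id_apply Y m p.2
  map_comp f g := by
    ext p
    · exact Functor.map_comp_apply X f g p.1
    · exact Functor.map_comp_apply Y f g p.2

/-- The product of two morphisms of simplicial sets. -/
def sprodMap {X X' Y Y' : SSet.{0}} (f : X ⟶ X') (g : Y ⟶ Y') : sprod X Y ⟶ sprod X' Y' where
  app m := TypeCat.ofHom fun p => (f.app m p.1, g.app m p.2)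
  naturality m m' φ := by
    ext p
    apply Prod.ext
    · exact NatTrans.naturality_apply f φ p.1
    · exact NatTrans.naturality_apply g φ p.2

/-- The pushout-product `f □ g : (A × Z) ∪ (B × W) ⟶ B × Z` of `f : A ⟶ B` and
`g : W ⟶ Z`, the domain being presented as the pushout `(A × Z) ∪_{A × W} (B × W)`. -/
noncomputable def pp {A B W Z : SSet.{0}} (f : A ⟶ B) (g : W ⟶ Z) :
    pushout (sprodMap (𝟙 A) g) (sprodMap f (𝟙 W)) ⟶ sprod B Z :=
  pushout.desc (sprodMap f (𝟙 Z)) (sprodMap (𝟙 B) g) rfl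

/-! ## Saturated classes of morphisms -/

/-- A class of morphisms is stable under retracts if, whenever `f` is a retract of `g`
in the arrow category, membership of `g` implies membership of `f`. -/
def StableUnderRetracts (T : MorphismProperty SSet.{0}) : Prop :=
  ∀ ⦃X Y X' Y' : SSet.{0}⦄ (f : X ⟶ Y) (g : X' ⟶ Y')
    (i : Arrow.mk f ⟶ Arrow.mk g) (r : Arrow.mk g ⟶ Arrow.mk f),
    i ≫ r = 𝟙 _ → T g → T f

/-- The inclusion functor `Set.Iio i ⥤ ι`. -/
def iioFunctor {ι : Type} [Preorder ι] (i : ι) : Set.Iio i ⥤ ι :=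
  Monotone.functor (f := Subtype.val) (fun _ _ h => h)

/-- The cocone on the restriction of `F : ι ⥤ SSet` to `Set.Iio i` with apex `F.obj i`. -/
def restrictionCocone {ι : Type} [Preorder ι] (F : ι ⥤ SSet.{0}) (i : ι) :
    Cocone (iioFunctor i ⋙ F) where
  pt := F.obj i
  ι :=
    { app := fun j => F.map (homOfLE j.2.le)
      naturality := fun j k h => by
        dsimp [iioFunctor]
        rw [← F.map_comp, Category.comp_id]
        congr 1 }

/-- A class of morphisms is stable under transfinite composition if, for every
well-ordered type `ι` and every functor `F : ι ⥤ SSet` which is continuous at limit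
stages and whose successor maps `F.obj i ⟶ F.obj (i+1)` all belong to the class, and
every colimit cocone `c` on `F`, the transfinite composite `F.obj ⊥ ⟶ c.pt` belongs to
the class. -/
def StableUnderTransfiniteComposition (T : MorphismProperty SSet.{0}) : Prop :=
  ∀ (ι : Type) [LinearOrder ι] [SuccOrder ι] [OrderBot ι] [WellFoundedLT ι]
    (F : ι ⥤ SSet.{0}),
    (∀ i : ι, ¬IsMax i → T (F.map (homOfLE (Order.le_succ i)))) →
    (∀ i : ι, Order.IsSuccLimit i → Nonempty (IsColimit (restrictionCocone F i))) →
    ∀ (c : Cocone F), IsColimit c → T (c.ι.app ⊥)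

/-- A class of morphisms of simplicial sets is saturated if it is closed under
isomorphisms, pushouts, transfinite compositions, and retracts. -/
structure IsSaturated (T : MorphismProperty SSet.{0}) : Prop where
  respectsIso : T.RespectsIso
  stableUnderCobaseChange : T.IsStableUnderCobaseChange
  stableUnderRetracts : StableUnderRetracts T
  stableUnderTransfiniteComposition : StableUnderTransfiniteComposition T

/-- The saturated closure of a class of morphisms: the smallest saturated class
containing it. -/
def satClosure (S : MorphismProperty SSet.{0}) : MorphismProperty SSet.{0} :=
  fun _ _ f => ∀ T : MorphismProperty SSet.{0}, IsSaturated T → S ≤ T → T f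

/-! ## Subcomplexes -/

/-- A subcomplex of a simplicial set. -/
structure Sub (X : SSet.{0}) where
  carrier : ∀ m, Set (X.obj m)
  map_mem : ∀ ⦃m m' : SimplexCategoryᵒᵖ⦄ (f : m ⟶ m') ⦃σ : X.obj m⦄,
    σ ∈ carrier m → X.map f σ ∈ carrier m'

/-- The simplicial set underlying a subcomplex. -/
def Sub.toSSet {X : SSet.{0}} (S : Sub X) : SSet.{0} where
  obj m := S.carrier m
  map f := TypeCat.ofHom fun σ => ⟨X.map f σ.1, S.map_mem f σ.2⟩
  map_id m := by
    ext σ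
    exact Functor.map_id_apply X m σ.1
  map_comp f g := by
    ext σ
    exact Functor.map_comp_apply X f g σ.1

/-- The inclusion of a subcomplex. -/
def Sub.ι {X : SSet.{0}} (S : Sub X) : S.toSSet ⟶ X where
  app _ := TypeCat.ofHom fun σ => σ.1
  naturality _ _ _ := rfl

/-- Containment of subcomplexes. -/
def Sub.Le {X : SSet.{0}} (S T : Sub X) : Prop := ∀ m, S.carrier m ⊆ T.carrier m

/-- The inclusion map associated to a containment of subcomplexes. -/
def Sub.homOfLe {X : SSet.{0}} {S T : Sub X} (h : S.Le T) : S.toSSet ⟶ T.toSSet where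
  app m := TypeCat.ofHom fun σ => ⟨σ.1, h m σ.2⟩
  naturality _ _ _ := rfl

/-- The union of two subcomplexes. -/
def Sub.union {X : SSet.{0}} (S T : Sub X) : Sub X where
  carrier m := S.carrier m ∪ T.carrier m
  map_mem _ _ f _ h := h.imp (fun hs => S.map_mem f hs) (fun ht => T.map_mem f ht)

/-- The intersection of two subcomplexes. -/
def Sub.inter {X : SSet.{0}} (S T : Sub X) : Sub X where
  carrier m := S.carrier m ∩ T.carrier m
  map_mem _ _ f _ h := ⟨S.map_mem f h.1, T.map_mem f h.2⟩

/-- A subcomplex `S` of `X`, viewed as a subcomplex of (the simplicial set underlying)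
another subcomplex `T` of `X`. -/
def Sub.restrict {X : SSet.{0}} (T S : Sub X) : Sub T.toSSet where
  carrier m := {σ | σ.1 ∈ S.carrier m}
  map_mem _ _ f _ h := S.map_mem f h

/-- The (dimension zero) object of `SimplexCategoryᵒᵖ` indexing vertices. -/
abbrev V0 : SimplexCategoryᵒᵖ := Opposite.op (SimplexCategory.mk 0)

/-- The full subcomplex of `X` on a set `ν` of vertices: the simplices all of whose
vertices lie in `ν`. -/
def fullSub (X : SSet.{0}) (ν : Set (X.obj V0)) : Sub X where
  carrier m := {σ | ∀ g : SimplexCategory.mk 0 ⟶ m.unop, X.map g.op σ ∈ ν}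
  map_mem := by
    intro m m' f σ hσ g
    rw [← FunctorToTypes.map_comp_apply]
    exact hσ (g ≫ f.unop)

/-! ## Widenings and widened inclusions -/

/-- The widening `W_ν(X)` of `X` at a set `ν` of vertices: the full subcomplex of
`J × X` on the vertex set `({0} × X₀) ∪ ({1} × ν)`. -/
def wideSub (X : SSet.{0}) (ν : Set (X.obj V0)) : Sub (sprod J X) :=
  fullSub (sprod J X) {p | p.1 0 = true → p.2 ∈ ν}

/-- The subcomplex `{0} × X` of `J × X` (the full subcomplex on the vertices
`{0} × X₀`). -/
def zeroSlice (X : SSet.{0}) : Sub (sprod J X) :=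
  fullSub (sprod J X) {p | p.1 0 = false}

/-- For `A` a subcomplex of `Y`, the subcomplex `J × A` of `J × Y`. -/
def Sub.prodJ {Y : SSet.{0}} (A : Sub Y) : Sub (sprod J Y) where
  carrier m := {p | p.2 ∈ A.carrier m}
  map_mem _ _ f _ h := A.map_mem f h

/-- Given a subcomplex (inclusion) `A = X ⊆ Y` and a set `ν` of vertices of `Y`, the
subcomplex `({0} × Y) ∪ W_{ν ∩ X₀}(X)` of `J × Y`: the domain of the inclusion
`X ↪ Y` widened at `ν`. -/
def widenedSub (Y : SSet.{0}) (A : Sub Y) (ν : Set (Y.obj V0)) : Sub (sprod J Y) :=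
  (zeroSlice Y).union ((wideSub Y (ν ∩ A.carrier V0)).inter A.prodJ)

lemma zeroSlice_le_wideSub (Y : SSet.{0}) (ν : Set (Y.obj V0)) :
    (zeroSlice Y).Le (wideSub Y ν) := by
  intro m σ hσ g h
  exact absurd (hσ g) (by simp [h])

lemma wideSub_mono (Y : SSet.{0}) {ν ν' : Set (Y.obj V0)} (h : ν ⊆ ν') :
    (wideSub Y ν).Le (wideSub Y ν') :=
  fun _ σ hσ g ht => h (hσ g ht)

lemma widenedSub_le (Y : SSet.{0}) (A : Sub Y) (ν : Set (Y.obj V0)) :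
    (widenedSub Y A ν).Le (wideSub Y ν) := by
  refine fun m σ hσ => Or.elim hσ (fun h => ?_) (fun h => ?_)
  · exact zeroSlice_le_wideSub Y ν m h
  · exact wideSub_mono Y Set.inter_subset_left m h.1

/-- The inclusion `X ↪ Y` widened at `ν`: the inclusion
`({0} × Y) ∪ W_{ν ∩ X₀}(X) ↪ W_ν(Y)`. -/
def widenedIncl (Y : SSet.{0}) (A : Sub Y) (ν : Set (Y.obj V0)) :
    (widenedSub Y A ν).toSSet ⟶ (wideSub Y ν).toSSet :=
  Sub.homOfLe (widenedSub_le Y A ν)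

/-- `Wide`: the class of all widened inclusions. -/
def Wide : MorphismProperty SSet.{0} := fun _ _ h =>
  ∃ (Y : SSet.{0}) (A : Sub Y) (ν : Set (Y.obj V0)),
    Arrow.mk h = Arrow.mk (widenedIncl Y A ν)

/-- `Wide^(1)`: the class of inclusions widened at a single vertex. -/
def Wide1 : MorphismProperty SSet.{0} := fun _ _ h =>
  ∃ (Y : SSet.{0}) (A : Sub Y) (v : Y.obj V0),
    Arrow.mk h = Arrow.mk (widenedIncl Y A {v})

/-! ## Narrow vertices -/

/-- A vertex `v` of `Y` is narrow if every simplex of `Y` has at most one vertex equal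
to `v`. -/
def Narrow (Y : SSet.{0}) (v : Y.obj V0) : Prop :=
  ∀ ⦃m : SimplexCategoryᵒᵖ⦄ (σ : Y.obj m) (g g' : SimplexCategory.mk 0 ⟶ m.unop),
    Y.map g.op σ = v → Y.map g'.op σ = v → g = g'

/-- `Wide_nar`: the class of inclusions widened at a narrow set of vertices. -/
def WideNar : MorphismProperty SSet.{0} := fun _ _ h =>
  ∃ (Y : SSet.{0}) (A : Sub Y) (ν : Set (Y.obj V0)),
    (∀ v ∈ ν, Narrow Y v) ∧ Arrow.mk h = Arrow.mk (widenedIncl Y A ν)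

/-- `Wide_nar^(1)`: the class of inclusions widened at a single narrow vertex. -/
def WideNar1 : MorphismProperty SSet.{0} := fun _ _ h =>
  ∃ (Y : SSet.{0}) (A : Sub Y) (v : Y.obj V0),
    Narrow Y v ∧ Arrow.mk h = Arrow.mk (widenedIncl Y A {v})

/-! ## Standard simplices, boundaries, skeleta, iso-horns -/

/-- The unique map to the terminal simplicial set `Δ[0]`. -/
def toPt (X : SSet.{0}) : X ⟶ Δ[0] where
  app m := TypeCat.ofHom fun _ => SSet.stdSimplex.const 0 0 m
  naturality m m' f := by
    ext x
    apply SSet.stdSimplex.objEquiv.injective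
    apply SimplexCategory.Hom.ext
    apply OrderHom.ext
    funext j
    exact Subsingleton.elim (α := Fin 1) _ _

/-- The `i`-th vertex of the standard simplex `Δ[n]`. -/
def vrt (n : ℕ) (i : Fin (n + 1)) : Δ[n].obj V0 :=
  SSet.stdSimplex.const n i V0

/-- The boundary `∂Δ[n]`, as a subcomplex of `Δ[n]`: the simplices which are not
surjective as monotone maps. -/
def bSub (n : ℕ) : Sub Δ[n] where
  carrier m := {σ | ¬Function.Surjective (SSet.stdSimplex.asOrderHom σ)}
  map_mem _ _ f σ hσ h := hσ (Function.Surjective.of_comp h)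

/-- The `k`-skeleton of `Y`, as a subcomplex: the simplices which factor through some
simplex of dimension at most `k`. -/
def skSub (Y : SSet.{0}) (k : ℕ) : Sub Y where
  carrier m := {σ | ∃ (j : ℕ) (_ : j ≤ k) (f : m.unop ⟶ SimplexCategory.mk j)
    (τ : Y.obj (Opposite.op (SimplexCategory.mk j))), Y.map f.op τ = σ}
  map_mem := by
    rintro m m' φ σ ⟨j, hj, f, τ, rfl⟩
    exact ⟨j, hj, φ.unop ≫ f, τ, by rw [← FunctorToTypes.map_comp_apply]; rfl⟩

/-- A `k`-simplex is nondegenerate if it admits no factorization through a simplex of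
strictly smaller dimension. -/
def Nondegenerate (Y : SSet.{0}) {k : ℕ} (σ : Y.obj (Opposite.op (SimplexCategory.mk k))) :
    Prop :=
  ∀ (j : ℕ) (f : SimplexCategory.mk k ⟶ SimplexCategory.mk j)
    (τ : Y.obj (Opposite.op (SimplexCategory.mk j))), Y.map f.op τ = σ → k ≤ j

/-- The iso-horn inclusion `𝕍_i[m+1] ↪ ∇̄_i[m+1]`: the boundary inclusion
`∂Δ[m] ↪ Δ[m]` widened at the single vertex `i`, i.e. the inclusion
`({0} × Δ[m]) ∪ W_i(∂Δ[m]) ↪ W_i(Δ[m])` of the iso-horn into the isoplex. -/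
def isoHornIncl (m : ℕ) (i : Fin (m + 1)) :
    (widenedSub Δ[m] (bSub m) {vrt m i}).toSSet ⟶ (wideSub Δ[m] {vrt m i}).toSSet :=
  widenedIncl Δ[m] (bSub m) {vrt m i}

/-- `IsoHorn`: the class of all iso-horn inclusions. -/
def IsoHorn : MorphismProperty SSet.{0} := fun _ _ h =>
  ∃ (m : ℕ) (i : Fin (m + 1)), Arrow.mk h = Arrow.mk (isoHornIncl m i)

/-! ## The classes `({0} ↪ J) □ Bdry` and `({0} ↪ J) □ Mono` -/

/-- The class `({0} ↪ J) □ Bdry` of pushout-products of the vertex `0 : Δ[0] ⟶ J`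
with the boundary inclusions `∂Δ[n] ↪ Δ[n]`. -/
def ppJ0Bdry : MorphismProperty SSet.{0} := fun _ _ h =>
  ∃ n : ℕ, Arrow.mk h = Arrow.mk (pp (ptJ false) (SSet.boundary n).ι)

/-- The class `({0} ↪ J) □ Mono` of pushout-products of the vertex `0 : Δ[0] ⟶ J`
with all monomorphisms of simplicial sets. -/
def ppJ0Mono : MorphismProperty SSet.{0} := fun _ _ h =>
  ∃ (W Z : SSet.{0}) (g : W ⟶ Z), Mono g ∧ Arrow.mk h = Arrow.mk (pp (ptJ false) g)


/-! ## Auxiliary machinery -/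

/-- Classical truth value of a proposition, as a `Bool`. -/
noncomputable def tb (P : Prop) : Bool := @decide P (Classical.propDecidable P)

lemma tb_eq_true {P : Prop} (h : P) : tb P = true :=
  @decide_eq_true P (Classical.propDecidable P) h

lemma tb_eq_false {P : Prop} (h : ¬P) : tb P = false := by
  by_contra hc
  exact h (@of_decide_eq_true P (Classical.propDecidable P) (eq_true_of_ne_false hc))

lemma of_tb_eq_true {P : Prop} (h : tb P = true) : P :=
  @of_decide_eq_true P (Classical.propDecidable P) h

/-- The `i`-th vertex of a simplex. -/
def vtx {X : SSet.{0}} {m : SimplexCategoryᵒᵖ} (x : X.obj m) (i : Fin (m.unop.len + 1)) :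
    X.obj V0 :=
  X.map (SimplexCategory.const (SimplexCategory.mk 0) m.unop i).op x

lemma hom0_eq_const {x : SimplexCategory} (g : SimplexCategory.mk 0 ⟶ x) :
    g = SimplexCategory.const (SimplexCategory.mk 0) x (g.toOrderHom 0) := by
  apply SimplexCategory.Hom.ext
  apply OrderHom.ext
  funext j
  fin_cases j
  rfl

lemma vtx_map {X : SSet.{0}} {m m' : SimplexCategoryᵒᵖ} (f : m ⟶ m') (x : X.obj m)
    (i : Fin (m'.unop.len + 1)) : vtx (X.map f x) i = vtx x (f.unop.toOrderHom i) := by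
  dsimp only [vtx]
  rw [← FunctorToTypes.map_comp_apply]
  rfl

lemma mem_wideSub_iff {Y : SSet.{0}} {ρ : Set (Y.obj V0)} {m : SimplexCategoryᵒᵖ}
    (σ : (sprod J Y).obj m) :
    σ ∈ (wideSub Y ρ).carrier m ↔ ∀ i, σ.1 i = true → vtx σ.2 i ∈ ρ := by
  constructor
  · intro h i hi
    exact h (SimplexCategory.const (SimplexCategory.mk 0) m.unop i) hi
  · intro h g ht
    have := h (g.toOrderHom 0) ht
    dsimp only [vtx] at this
    rwa [← hom0_eq_const g] at this

lemma mem_zeroSlice_iff {Y : SSet.{0}} {m : SimplexCategoryᵒᵖ} (σ : (sprod J Y).obj m) :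
    σ ∈ (zeroSlice Y).carrier m ↔ ∀ i, σ.1 i = false := by
  constructor
  · intro h i
    exact h (SimplexCategory.const (SimplexCategory.mk 0) m.unop i)
  · intro h g
    exact h (g.toOrderHom 0)

lemma vtx_mem_carrier {Y : SSet.{0}} {A : Sub Y} {m : SimplexCategoryᵒᵖ} {y : Y.obj m}
    (hy : y ∈ A.carrier m) (i : Fin (m.unop.len + 1)) : vtx y i ∈ A.carrier V0 :=
  A.map_mem _ hy

/-! ## Pushouts of subcomplex inclusions -/

lemma sub_isPushout {X : SSet.{0}} {P S T U : Sub X}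
    (hPS : P.Le S) (hPT : P.Le T) (hS : S.Le U) (hT : T.Le U)
    (hcap : ∀ m σ, σ ∈ S.carrier m → σ ∈ T.carrier m → σ ∈ P.carrier m)
    (hcup : ∀ m σ, σ ∈ U.carrier m → σ ∈ S.carrier m ∨ σ ∈ T.carrier m) :
    IsPushout (Sub.homOfLe hPS) (Sub.homOfLe hPT) (Sub.homOfLe hS) (Sub.homOfLe hT) := by
  have w : Sub.homOfLe hPS ≫ Sub.homOfLe hS = Sub.homOfLe hPT ≫ Sub.homOfLe hT := rfl
  refine IsPushout.of_isColimit (c := PushoutCocone.mk _ _ w) ?_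
  refine evaluationJointlyReflectsColimits _ (fun k => ?_)
  refine (isColimitMapCoconePushoutCoconeEquiv ((evaluation _ _).obj k) w).symm ?_
  refine PushoutCocone.IsColimit.mk _
    (fun s => TypeCat.ofHom (fun (x : U.carrier k) => @dite _ (x.1 ∈ S.carrier k) (Classical.propDecidable _)
      (fun h => s.inl ⟨x.1, h⟩)
      (fun h => s.inr ⟨x.1, ((hcup k x.1 x.2).resolve_left h)⟩))) ?_ ?_ ?_
  · intro s
    ext x
    exact dif_pos x.2
  · intro s
    ext x
    show @dite _ (x.1 ∈ S.carrier k) (Classical.propDecidable _) _ _ = s.inr x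
    by_cases h : x.1 ∈ S.carrier k
    · exact (dif_pos h).trans
        (ConcreteCategory.congr_hom s.condition (⟨x.1, hcap k x.1 h x.2⟩ : P.toSSet.obj k))
    · exact dif_neg h
  · intro s mdesc h₁ h₂
    ext x
    by_cases h : x.1 ∈ S.carrier k
    · simp only [dif_pos h]
      refine (ConcreteCategory.congr_hom h₁ (⟨x.1, h⟩ : S.toSSet.obj k)).trans ?_
      show _ = @dite _ (x.1 ∈ S.carrier k) (Classical.propDecidable _) _ _
      symm
      exact dif_pos h
    · simp only [dif_neg h]
      refine (ConcreteCategory.congr_hom h₂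
        (⟨x.1, (hcup k x.1 x.2).resolve_left h⟩ : T.toSSet.obj k)).trans ?_
      show _ = @dite _ (x.1 ∈ S.carrier k) (Classical.propDecidable _) _ _
      symm
      exact dif_neg h

lemma vtx_V0 {Y : SSet.{0}} (q : Y.obj V0) (j : Fin 1) : vtx q j = q := by
  have hj : j = 0 := Subsingleton.elim j 0
  subst hj
  dsimp only [vtx]
  rw [SimplexCategory.const_eq_id, op_id, FunctorToTypes.map_id_apply]

lemma band_elim {a b : Bool} (h : (a && b) = true) : a = true ∧ b = true := by
  simp only [Bool.and_eq_true] at h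
  exact h

lemma bor_elim {a b : Bool} (h : (a || b) = true) : a = true ∨ b = true := by
  simp only [Bool.or_eq_true] at h
  exact h

section SplitMerge

variable (Y : SSet.{0}) (A : Sub Y) (ν μ : Set (Y.obj V0))

/-- The splitting map on underlying simplices: `(c, y) ↦ (c ∧ ¬(· ∈ ν), (c ∧ (· ∈ ν), y))`. -/
noncomputable def splitFun {m : SimplexCategoryᵒᵖ} (σ : (sprod J Y).obj m) :
    (sprod J (wideSub Y ν).toSSet).obj m :=
  (fun i => σ.1 i && !(tb (vtx σ.2 i ∈ ν)),
   ⟨(fun i => σ.1 i && tb (vtx σ.2 i ∈ ν), σ.2), by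
      apply (mem_wideSub_iff _).2
      intro i hi
      exact of_tb_eq_true (band_elim hi).2⟩)

/-- The merging map on underlying simplices: `(a, (b, y)) ↦ (a ∨ b, y)`. -/
def mergeFun {m : SimplexCategoryᵒᵖ} (p : (sprod J (wideSub Y ν).toSSet).obj m) :
    (sprod J Y).obj m :=
  (fun i => p.1 i || p.2.1.1 i, p.2.1.2)

lemma splitFun_natural {m m' : SimplexCategoryᵒᵖ} (f : m ⟶ m') (σ : (sprod J Y).obj m) :
    splitFun Y ν ((sprod J Y).map f σ) = (sprod J (wideSub Y ν).toSSet).map f (splitFun Y ν σ) := by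
  dsimp only [splitFun, sprod, J]
  refine Prod.ext ?_ (Subtype.ext (Prod.ext ?_ rfl))
  · funext i
    show (σ.1 (f.unop.toOrderHom i) && !(tb (vtx (Y.map f σ.2) i ∈ ν))) = _
    rw [vtx_map]
    rfl
  · funext i
    show (σ.1 (f.unop.toOrderHom i) && tb (vtx (Y.map f σ.2) i ∈ ν)) = _
    rw [vtx_map]
    rfl

lemma merge_splitFun {m : SimplexCategoryᵒᵖ} (σ : (sprod J Y).obj m) :
    mergeFun Y ν (splitFun Y ν σ) = σ := by
  have hb : ∀ c t : Bool, ((c && !t) || (c && t)) = c := by decide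
  refine Prod.ext ?_ rfl
  funext i
  exact hb _ _

lemma split_mergeFun {m : SimplexCategoryᵒᵖ} (p : (sprod J (wideSub Y ν).toSSet).obj m)
    (hp : p ∈ (wideSub (wideSub Y ν).toSSet
      {q | q.1.1 0 = false ∧ q.1.2 ∈ μ \ ν}).carrier m) :
    splitFun Y ν (mergeFun Y ν p) = p := by
  rw [mem_wideSub_iff] at hp
  have hb := (mem_wideSub_iff p.2.1).1 p.2.2
  refine Prod.ext ?_ (Subtype.ext (Prod.ext ?_ rfl))
  · funext i
    show ((p.1 i || p.2.1.1 i) && !(tb (vtx p.2.1.2 i ∈ ν))) = p.1 i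
    by_cases hν : vtx p.2.1.2 i ∈ ν
    · rw [tb_eq_true hν]
      have ha : p.1 i = false := by
        by_contra hc
        exact (hp i (eq_true_of_ne_false hc)).2.2 hν
      rw [ha]
      simp
    · rw [tb_eq_false hν]
      have hbf : p.2.1.1 i = false := by
        by_contra hc
        exact hν (hb i (eq_true_of_ne_false hc))
      rw [hbf]
      simp
  · funext i
    show ((p.1 i || p.2.1.1 i) && tb (vtx p.2.1.2 i ∈ ν)) = p.2.1.1 i
    by_cases hν : vtx p.2.1.2 i ∈ ν
    · rw [tb_eq_true hν]
      have ha : p.1 i = false := by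
        by_contra hc
        exact (hp i (eq_true_of_ne_false hc)).2.2 hν
      rw [ha]
      simp
    · rw [tb_eq_false hν]
      have hbf : p.2.1.1 i = false := by
        by_contra hc
        exact hν (hb i (eq_true_of_ne_false hc))
      rw [hbf]
      simp

lemma splitFun_mem_wide {m : SimplexCategoryᵒᵖ} (σ : (sprod J Y).obj m)
    (h : σ ∈ (wideSub Y μ).carrier m) :
    splitFun Y ν σ ∈ (wideSub (wideSub Y ν).toSSet
      {q | q.1.1 0 = false ∧ q.1.2 ∈ μ \ ν}).carrier m := by
  rw [mem_wideSub_iff] at h ⊢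
  intro i hi
  have hc : σ.1 i = true := (band_elim hi).1
  have ht : tb (vtx σ.2 i ∈ ν) = false := by
    have h2 := (band_elim hi).2
    cases htb : tb (vtx σ.2 i ∈ ν)
    · rfl
    · rw [htb] at h2; cases h2
  have hν : vtx σ.2 i ∉ ν := by
    intro hmem
    rw [tb_eq_true hmem] at ht; cases ht
  refine ⟨?_, h i hc, hν⟩
  show (σ.1 i && tb (vtx σ.2 i ∈ ν)) = false
  rw [ht]
  simp

lemma mergeFun_mem_wide (hνμ : ν ⊆ μ) {m : SimplexCategoryᵒᵖ}
    (p : (sprod J (wideSub Y ν).toSSet).obj m)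
    (hp : p ∈ (wideSub (wideSub Y ν).toSSet
      {q | q.1.1 0 = false ∧ q.1.2 ∈ μ \ ν}).carrier m) :
    mergeFun Y ν p ∈ (wideSub Y μ).carrier m := by
  rw [mem_wideSub_iff] at hp ⊢
  have hb := (mem_wideSub_iff p.2.1).1 p.2.2
  intro i hi
  rcases bor_elim hi with ha | hbi
  · exact (hp i ha).2.1
  · exact hνμ (hb i hbi)

end SplitMerge

section SplitMergeDom

variable (Y : SSet.{0}) (A : Sub Y) (ν μ : Set (Y.obj V0))

lemma splitFun_mem_dom {m : SimplexCategoryᵒᵖ} (σ : (sprod J Y).obj m)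
    (h : σ ∈ ((wideSub Y ν).union
      ((wideSub Y (μ ∩ A.carrier V0)).inter A.prodJ)).carrier m) :
    splitFun Y ν σ ∈ (widenedSub (wideSub Y ν).toSSet
      ((wideSub Y ν).restrict ((wideSub Y (ν ∩ A.carrier V0)).inter A.prodJ))
      {q | q.1.1 0 = false ∧ q.1.2 ∈ μ \ ν}).carrier m := by
  rcases h with h | ⟨h1, h2⟩
  · left
    rw [mem_zeroSlice_iff]
    rw [mem_wideSub_iff] at h
    intro i
    show (σ.1 i && !(tb (vtx σ.2 i ∈ ν))) = false
    cases hc : σ.1 i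
    · simp
    · rw [tb_eq_true (h i hc)]; simp
  · right
    rw [mem_wideSub_iff] at h1
    have hbmem : ∀ i, (σ.1 i && tb (vtx σ.2 i ∈ ν)) = true →
        vtx σ.2 i ∈ ν ∩ A.carrier V0 := by
      intro i hi
      exact ⟨of_tb_eq_true (band_elim hi).2, vtx_mem_carrier h2 i⟩
    refine ⟨?_, ?_, h2⟩
    · rw [mem_wideSub_iff]
      intro i hi
      have hc : σ.1 i = true := (band_elim hi).1
      have ht : tb (vtx σ.2 i ∈ ν) = false := by
        have h2' := (band_elim hi).2
        cases htb : tb (vtx σ.2 i ∈ ν)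
        · rfl
        · rw [htb] at h2'; cases h2'
      have hν : vtx σ.2 i ∉ ν := fun hmem => by rw [tb_eq_true hmem] at ht; cases ht
      have hbf : (σ.1 i && tb (vtx σ.2 i ∈ ν)) = false := by rw [ht]; simp
      refine ⟨⟨hbf, (h1 i hc).1, hν⟩, ?_, (h1 i hc).2⟩
      rw [mem_wideSub_iff]
      intro j hj
      have hj' : (σ.1 i && tb (vtx σ.2 i ∈ ν)) = true := hj
      rw [hbf] at hj'
      cases hj'
    · -- (splitFun σ).2 ∈ wideSub (ν ∩ A₀)
      rw [mem_wideSub_iff]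
      intro i hi
      exact hbmem i hi

lemma mergeFun_mem_dom (hνμ : ν ⊆ μ) {m : SimplexCategoryᵒᵖ}
    (p : (sprod J (wideSub Y ν).toSSet).obj m)
    (hp : p ∈ (widenedSub (wideSub Y ν).toSSet
      ((wideSub Y ν).restrict ((wideSub Y (ν ∩ A.carrier V0)).inter A.prodJ))
      {q | q.1.1 0 = false ∧ q.1.2 ∈ μ \ ν}).carrier m) :
    mergeFun Y ν p ∈ ((wideSub Y ν).union
      ((wideSub Y (μ ∩ A.carrier V0)).inter A.prodJ)).carrier m := by
  have hb := (mem_wideSub_iff p.2.1).1 p.2.2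
  rcases hp with h | ⟨h1, h2⟩
  · left
    rw [mem_zeroSlice_iff] at h
    rw [mem_wideSub_iff]
    intro i hi
    rcases bor_elim hi with ha | hbi
    · rw [h i] at ha; cases ha
    · exact hb i hbi
  · right
    rw [mem_wideSub_iff] at h1
    refine ⟨?_, h2.2⟩
    rw [mem_wideSub_iff]
    intro i hi
    rcases bor_elim hi with ha | hbi
    · exact ⟨(h1 i ha).1.2.1, (h1 i ha).2.2⟩
    · have := (mem_wideSub_iff p.2.1).1 h2.1 i hbi
      exact ⟨hνμ this.1, this.2⟩

end SplitMergeDom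

section Assemble

variable (Y : SSet.{0}) (A : Sub Y) (ν μ : Set (Y.obj V0))

/-- The codomain isomorphism `W_μ(Y) ≅ W_τ(W_ν(Y))`. -/
noncomputable def codIso (hνμ : ν ⊆ μ) : (wideSub Y μ).toSSet ≅
    (wideSub (wideSub Y ν).toSSet {q | q.1.1 0 = false ∧ q.1.2 ∈ μ \ ν}).toSSet where
  hom :=
    { app := fun m => TypeCat.ofHom fun σ => ⟨splitFun Y ν σ.1, splitFun_mem_wide Y ν μ σ.1 σ.2⟩
      naturality := fun m m' f => by ext σ; exact Subtype.ext (splitFun_natural Y ν f σ.1) }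
  inv :=
    { app := fun m => TypeCat.ofHom fun p => ⟨mergeFun Y ν p.1, mergeFun_mem_wide Y ν μ hνμ p.1 p.2⟩
      naturality := fun m m' f => by ext p; exact Subtype.ext rfl }
  hom_inv_id := by
    ext m σ
    exact Subtype.ext (merge_splitFun Y ν σ.1)
  inv_hom_id := by
    ext m p
    exact Subtype.ext (split_mergeFun Y ν μ p.1 p.2)

/-- The domain isomorphism. -/
noncomputable def domIso (hνμ : ν ⊆ μ) :
    ((wideSub Y ν).union ((wideSub Y (μ ∩ A.carrier V0)).inter A.prodJ)).toSSet ≅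
    (widenedSub (wideSub Y ν).toSSet
      ((wideSub Y ν).restrict ((wideSub Y (ν ∩ A.carrier V0)).inter A.prodJ))
      {q | q.1.1 0 = false ∧ q.1.2 ∈ μ \ ν}).toSSet where
  hom :=
    { app := fun m => TypeCat.ofHom fun σ => ⟨splitFun Y ν σ.1, splitFun_mem_dom Y A ν μ σ.1 σ.2⟩
      naturality := fun m m' f => by ext σ; exact Subtype.ext (splitFun_natural Y ν f σ.1) }
  inv :=
    { app := fun m => TypeCat.ofHom fun p => ⟨mergeFun Y ν p.1, mergeFun_mem_dom Y A ν μ hνμ p.1 p.2⟩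
      naturality := fun m m' f => by ext p; exact Subtype.ext rfl }
  hom_inv_id := by
    ext m σ
    exact Subtype.ext (merge_splitFun Y ν σ.1)
  inv_hom_id := by
    ext m p
    exact Subtype.ext (split_mergeFun Y ν μ p.1
      (widenedSub_le (wideSub Y ν).toSSet _ _ m p.2))

end Assemble
/-- Given an inclusion `X ↪ Y` (a subcomplex `A` of `Y`) and vertex sets
`ν ⊆ μ ⊆ Y₀`, with `ν′ = ν ∩ X₀` and `μ′ = μ ∩ X₀`, the widened inclusion
`({0} × Y) ∪ W_{μ′}(X) ↪ W_μ(Y)` factors as the inclusion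
`({0} × Y) ∪ W_{μ′}(X) ↪ W_ν(Y) ∪ W_{μ′}(X)`, which is a pushout of the inclusion
`X ↪ Y` widened at `ν`, followed by the inclusion `W_ν(Y) ∪ W_{μ′}(X) ↪ W_μ(Y)`, which
is isomorphic in the arrow category to the inclusion `W_{ν′}(X) ↪ W_ν(Y)` widened at
the vertex set `{(0, v) : v ∈ μ ∖ ν}`. -/
theorem widenedIncl_factorization (Y : SSet.{0}) (A : Sub Y) (ν μ : Set (Y.obj V0))
    (hνμ : ν ⊆ μ) :
    ∃ (h₁ : (widenedSub Y A μ).Le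
        ((wideSub Y ν).union ((wideSub Y (μ ∩ A.carrier V0)).inter A.prodJ)))
      (h₂ : ((wideSub Y ν).union ((wideSub Y (μ ∩ A.carrier V0)).inter A.prodJ)).Le
        (wideSub Y μ)),
      Sub.homOfLe h₁ ≫ Sub.homOfLe h₂ = widenedIncl Y A μ ∧
      (∃ (u : (widenedSub Y A ν).toSSet ⟶ (widenedSub Y A μ).toSSet)
        (v : (wideSub Y ν).toSSet ⟶
          ((wideSub Y ν).union ((wideSub Y (μ ∩ A.carrier V0)).inter A.prodJ)).toSSet),
        IsPushout u (widenedIncl Y A ν) (Sub.homOfLe h₁) v) ∧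
      Nonempty (Arrow.mk (Sub.homOfLe h₂) ≅
        Arrow.mk (widenedIncl (wideSub Y ν).toSSet
          ((wideSub Y ν).restrict ((wideSub Y (ν ∩ A.carrier V0)).inter A.prodJ))
          {q | q.1.1 0 = false ∧ q.1.2 ∈ μ \ ν})) := by
  have h₁ : (widenedSub Y A μ).Le
      ((wideSub Y ν).union ((wideSub Y (μ ∩ A.carrier V0)).inter A.prodJ)) := by
    intro m σ h
    rcases h with h | h
    · exact Or.inl (zeroSlice_le_wideSub Y ν m h)
    · exact Or.inr h
  have h₂ : ((wideSub Y ν).union ((wideSub Y (μ ∩ A.carrier V0)).inter A.prodJ)).Le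
      (wideSub Y μ) := by
    intro m σ h
    rcases h with h | h
    · exact wideSub_mono Y hνμ m h
    · exact wideSub_mono Y Set.inter_subset_left m h.1
  refine ⟨h₁, h₂, rfl, ?_, ?_⟩
  · have hu : (widenedSub Y A ν).Le (widenedSub Y A μ) := by
      intro m σ h
      rcases h with h | h
      · exact Or.inl h
      · exact Or.inr ⟨wideSub_mono Y (Set.inter_subset_inter_left _ hνμ) m h.1, h.2⟩
    have hv : (wideSub Y ν).Le
        ((wideSub Y ν).union ((wideSub Y (μ ∩ A.carrier V0)).inter A.prodJ)) :=
      fun m σ h => Or.inl h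
    refine ⟨Sub.homOfLe hu, Sub.homOfLe hv, ?_⟩
    exact sub_isPushout hu (widenedSub_le Y A ν) h₁ hv
      (fun m σ hS hT => by
        rcases hS with h | h
        · exact Or.inl h
        · refine Or.inr ⟨?_, h.2⟩
          rw [mem_wideSub_iff]
          intro i hi
          exact ⟨(mem_wideSub_iff σ).1 hT i hi, vtx_mem_carrier h.2 i⟩)
      (fun m σ h => h.elim (fun h => Or.inr h) (fun h => Or.inl (Or.inr h)))
  · exact ⟨Arrow.isoMk (domIso Y A ν μ hνμ) (codIso Y ν μ hνμ) rfl⟩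

end Paper
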